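/- Let m ≥ 2 and let F(x) = (x^{2m} − m x²)/(m − 1), a polynomial of even degree 2m. Then F(1) = F(−1) = −1, F'(1) = F'(−1) = 0, and |F(y)| < 1 for all y ∈ (−1,1). Moreover there exists a global solution (x,u,θ): ℝ → ℝ³ of x' = cos θ, u' = sin θ, θ' = F'(x) with sin θ(s) = F(x(s)), cos θ(s) > 0 and −1 < x(s) < 1 for all s, x(s) → −1 as s → −∞, and x(s) → 1 as s → +∞; hence the plane curve (x(s),u(s)) is a graph over the interval (−1,1), giving an infinite geodesic graph at the even jet level k = 2m ≥ 4. -/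

import Mathlib

open Filter

/-- The even-degree polynomial function `F(y) = (y^{2m} − m y²)/(m−1)` generating an
infinite geodesic graph at the even jet level `k = 2m`. -/
noncomputable def evenGraphF (m : ℕ) : ℝ → ℝ :=
  fun y => (y ^ (2 * m) - (m : ℝ) * y ^ 2) / ((m : ℝ) - 1)

open Finset

section aux1
variable {m : ℕ}


lemma eGF_c_pos (hm : 2 ≤ m) : (1:ℝ) ≤ (m:ℝ) - 1 := by
  have : (2:ℝ) ≤ (m:ℝ) := by exact_mod_cast hm
  linarith

lemma eGF_identity (t : ℝ) :
    t ^ m - (m:ℝ) * t + ((m:ℝ) - 1) = (1 - t) * ((m:ℝ) - ∑ j ∈ range m, t ^ j) := by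
  have h := geom_sum_mul t m
  ring_nf
  ring_nf at h
  linarith [h]

lemma eGF_S_ge_one (hm : 2 ≤ m) {t : ℝ} (ht : 0 ≤ t) :
    1 ≤ ∑ j ∈ range m, t ^ j := by
  have h0 : (0:ℕ) ∈ range m := by simp; omega
  calc (1:ℝ) = t ^ 0 := by simp
  _ ≤ ∑ j ∈ range m, t ^ j :=
    Finset.single_le_sum (f := fun j => t ^ j) (fun i _ => pow_nonneg ht i) h0

lemma eGF_S_le (hm : 2 ≤ m) {t : ℝ} (ht : 0 ≤ t) (ht1 : t ≤ 1) :
    ∑ j ∈ range m, t ^ j ≤ 1 + ((m:ℝ) - 1) * t := by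
  obtain ⟨n, rfl⟩ : ∃ n, m = n + 1 := ⟨m - 1, by omega⟩
  rw [Finset.sum_range_succ']
  have h1 : ∀ j ∈ range n, t ^ (j + 1) ≤ t := fun j _ =>
    pow_le_of_le_one ht ht1 (by omega)
  have h2 : ∑ j ∈ range n, t ^ (j+1) ≤ ∑ j ∈ range n, t :=
    Finset.sum_le_sum h1
  simp only [Finset.sum_const, card_range, nsmul_eq_mul] at h2
  push_cast
  simp only [pow_zero]
  linarith

lemma eGF_mS_le (hm : 2 ≤ m) {t : ℝ} (ht : 0 ≤ t) (ht1 : t ≤ 1) :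
    (m:ℝ) - ∑ j ∈ range m, t ^ j ≤ (1 - t) * ((m:ℝ) * ((m:ℝ) - 1) / 2) := by
  have key : (m:ℝ) - ∑ j ∈ range m, t ^ j = ∑ j ∈ range m, (1 - t ^ j) := by
    rw [Finset.sum_sub_distrib]
    simp
  rw [key]
  have h1 : ∀ j ∈ range m, (1 : ℝ) - t ^ j ≤ (j:ℝ) * (1 - t) := by
    intro j _
    have := one_add_mul_sub_le_pow (a := t) (by linarith) j
    nlinarith
  calc ∑ j ∈ range m, ((1:ℝ) - t ^ j) ≤ ∑ j ∈ range m, (j:ℝ) * (1 - t) :=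
        Finset.sum_le_sum h1
  _ = (∑ j ∈ range m, (j:ℝ)) * (1 - t) := by rw [Finset.sum_mul]
  _ = (1 - t) * ((m:ℝ) * ((m:ℝ) - 1) / 2) := by
      have h2 : ((∑ j ∈ range m, j) * 2 : ℕ) = m * (m - 1) := Finset.sum_range_id_mul_two m
      have hm1 : (1:ℕ) ≤ m := by omega
      have h3 := congrArg (Nat.cast (R := ℝ)) h2
      push_cast [Nat.cast_sub hm1] at h3
      have h4 : (∑ j ∈ range m, (j:ℝ)) = (m:ℝ) * ((m:ℝ) - 1) / 2 := by linarith
      rw [h4]; ring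

end aux1

section aux2
variable {m : ℕ}


lemma eGF_one_add (hm : 2 ≤ m) (y : ℝ) :
    1 + evenGraphF m y
      = (1 - y^2) * ((m:ℝ) - ∑ j ∈ range m, (y^2) ^ j) / ((m:ℝ) - 1) := by
  have hc : ((m:ℝ) - 1) ≠ 0 := by have := eGF_c_pos hm; linarith
  have hid := eGF_identity (m := m) (y^2)
  unfold evenGraphF
  rw [pow_mul]
  field_simp
  linarith

lemma eGF_lb (hm : 2 ≤ m) {y : ℝ} (hy : y ∈ Set.Icc (-1:ℝ) 1) :
    (1 - y^2)^2 ≤ 1 + evenGraphF m y := by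
  obtain ⟨h1, h2⟩ := hy
  have ht : (0:ℝ) ≤ y^2 := sq_nonneg y
  have ht1 : y^2 ≤ 1 := by nlinarith
  have hc := eGF_c_pos hm
  have hS := eGF_S_le hm ht ht1
  rw [eGF_one_add hm]
  rw [le_div_iff₀ (by linarith : (0:ℝ) < (m:ℝ) - 1)]
  nlinarith [mul_nonneg (by linarith : (0:ℝ) ≤ 1 - y^2)
    (by linarith : (0:ℝ) ≤ ((m:ℝ) - ∑ j ∈ range m, (y^2)^j) - ((m:ℝ)-1)*(1-y^2))]

lemma eGF_ub1 (hm : 2 ≤ m) {y : ℝ} (hy : y ∈ Set.Icc (-1:ℝ) 1) :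
    1 + evenGraphF m y ≤ 1 - y^2 := by
  obtain ⟨h1, h2⟩ := hy
  have ht : (0:ℝ) ≤ y^2 := sq_nonneg y
  have ht1 : y^2 ≤ 1 := by nlinarith
  have hc := eGF_c_pos hm
  have hS := eGF_S_ge_one (t := y^2) hm ht
  rw [eGF_one_add hm]
  rw [div_le_iff₀ (by linarith : (0:ℝ) < (m:ℝ) - 1)]
  nlinarith [mul_nonneg (by linarith : (0:ℝ) ≤ 1 - y^2)
    (by linarith : (0:ℝ) ≤ ((m:ℝ)-1) - ((m:ℝ) - ∑ j ∈ range m, (y^2)^j))]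

lemma eGF_ub2 (hm : 2 ≤ m) {y : ℝ} (hy : y ∈ Set.Icc (-1:ℝ) 1) :
    1 + evenGraphF m y ≤ (m:ℝ)/2 * (1 - y^2)^2 := by
  obtain ⟨h1, h2⟩ := hy
  have ht : (0:ℝ) ≤ y^2 := sq_nonneg y
  have ht1 : y^2 ≤ 1 := by nlinarith
  have hc := eGF_c_pos hm
  have hS := eGF_mS_le (t := y^2) hm ht ht1
  rw [eGF_one_add hm]
  rw [div_le_iff₀ (by linarith : (0:ℝ) < (m:ℝ) - 1)]
  nlinarith [mul_nonneg (by linarith : (0:ℝ) ≤ 1 - y^2)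
    (by linarith : (0:ℝ) ≤ (1 - y^2) * ((m:ℝ) * ((m:ℝ) - 1) / 2)
        - ((m:ℝ) - ∑ j ∈ range m, (y^2)^j))]

lemma eGF_le_zero (hm : 2 ≤ m) {y : ℝ} (hy : y ∈ Set.Icc (-1:ℝ) 1) :
    evenGraphF m y ≤ 0 := by
  have := eGF_ub1 hm hy
  nlinarith [sq_nonneg y]

lemma eGF_ge_neg_one (hm : 2 ≤ m) {y : ℝ} (hy : y ∈ Set.Icc (-1:ℝ) 1) :
    -1 ≤ evenGraphF m y := by
  have := eGF_lb hm hy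
  nlinarith [sq_nonneg (1 - y^2)]

lemma eGF_abs_lt (hm : 2 ≤ m) {y : ℝ} (hy : y ∈ Set.Ioo (-1:ℝ) 1) :
    |evenGraphF m y| < 1 := by
  obtain ⟨h1, h2⟩ := hy
  have hyc : y ∈ Set.Icc (-1:ℝ) 1 := ⟨le_of_lt h1, le_of_lt h2⟩
  have hlb := eGF_lb hm hyc
  have h0 := eGF_le_zero hm hyc
  have hsq : (0:ℝ) < (1 - y^2)^2 := by
    nlinarith [mul_pos (show (0:ℝ) < 1 - y by linarith) (show (0:ℝ) < 1 + y by linarith)]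
  rw [abs_lt]
  constructor <;> nlinarith

/-- the speed function -/
noncomputable def eGFg (m : ℕ) : ℝ → ℝ := fun y => Real.sqrt (1 - (evenGraphF m y)^2)

lemma eGFg_cont : Continuous (eGFg m) := by
  apply Real.continuous_sqrt.comp
  apply Continuous.sub continuous_const
  apply Continuous.pow
  unfold evenGraphF
  exact ((continuous_pow (2*m)).sub (continuous_const.mul (continuous_pow 2))).div_const _

lemma eGFg_lb (hm : 2 ≤ m) {y : ℝ} (hy : y ∈ Set.Icc (-1:ℝ) 1) :
    1 - y^2 ≤ eGFg m y := by
  have h1 : y^2 ≤ 1 := by obtain ⟨a,b⟩ := hy; nlinarith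
  have hlb := eGF_lb hm hy
  have h0 := eGF_le_zero hm hy
  have hge := eGF_ge_neg_one hm hy
  apply Real.le_sqrt_of_sq_le
  nlinarith

lemma eGFg_ub (hm : 2 ≤ m) {y : ℝ} (hy : y ∈ Set.Icc (-1:ℝ) 1) :
    eGFg m y ≤ Real.sqrt m * (1 - y^2) := by
  have h1 : y^2 ≤ 1 := by obtain ⟨a,b⟩ := hy; nlinarith
  have hub := eGF_ub2 hm hy
  have h0 := eGF_le_zero hm hy
  have hge := eGF_ge_neg_one hm hy
  have key : 1 - (evenGraphF m y)^2 ≤ (m:ℝ) * (1 - y^2)^2 := by nlinarith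
  calc eGFg m y ≤ Real.sqrt ((m:ℝ) * (1 - y^2)^2) := Real.sqrt_le_sqrt key
  _ = Real.sqrt m * (1 - y^2) := by
      rw [Real.sqrt_mul (by positivity), Real.sqrt_sq (by linarith)]

lemma eGFg_pos (hm : 2 ≤ m) {y : ℝ} (hy : y ∈ Set.Ioo (-1:ℝ) 1) :
    0 < eGFg m y := by
  obtain ⟨h1, h2⟩ := hy
  have := eGFg_lb hm ⟨le_of_lt h1, le_of_lt h2⟩
  nlinarith

lemma eGF_hasDerivAt (hm : 2 ≤ m) (y : ℝ) :
    HasDerivAt (evenGraphF m)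
      ((2*(m:ℝ) * y^(2*m-1) - 2*(m:ℝ)*y) / ((m:ℝ) - 1)) y := by
  have h := (((hasDerivAt_pow (2*m) y).sub
    ((hasDerivAt_pow 2 y).const_mul (m:ℝ))).div_const ((m:ℝ)-1))
  refine h.congr_deriv ?_
  push_cast
  ring_nf

lemma eGF_deriv (hm : 2 ≤ m) (y : ℝ) :
    deriv (evenGraphF m) y = (2*(m:ℝ) * y^(2*m-1) - 2*(m:ℝ)*y) / ((m:ℝ) - 1) :=
  (eGF_hasDerivAt hm y).deriv

lemma eGF_deriv_one (hm : 2 ≤ m) : deriv (evenGraphF m) 1 = 0 := by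
  rw [eGF_deriv hm]; simp

lemma eGF_deriv_neg_one (hm : 2 ≤ m) : deriv (evenGraphF m) (-1) = 0 := by
  rw [eGF_deriv hm]
  have hodd : Odd (2*m - 1) := ⟨m - 1, by omega⟩
  rw [hodd.neg_one_pow]
  ring

lemma eGF_one (hm : 2 ≤ m) : evenGraphF m 1 = -1 := by
  have hc : ((m:ℝ) - 1) ≠ 0 := by have := eGF_c_pos hm; linarith
  unfold evenGraphF
  rw [one_pow, one_pow]
  field_simp
  ring

lemma eGF_neg_one (hm : 2 ≤ m) : evenGraphF m (-1) = -1 := by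
  have hc : ((m:ℝ) - 1) ≠ 0 := by have := eGF_c_pos hm; linarith
  unfold evenGraphF
  rw [Even.neg_one_pow ⟨m, by ring⟩, neg_one_sq]
  field_simp
  ring

end aux2

noncomputable def eGFh (m : ℕ) : ℝ → ℝ := fun y => ∫ t in (0:ℝ)..y, (eGFg m t)⁻¹

section aux3
variable {m : ℕ}


lemma eGF_even (y : ℝ) : evenGraphF m (-y) = evenGraphF m y := by
  unfold evenGraphF
  rw [Even.neg_pow ⟨m, by ring⟩, neg_pow, Even.neg_one_pow (by decide), one_mul]

lemma eGFg_even (y : ℝ) : eGFg m (-y) = eGFg m y := by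
  unfold eGFg; rw [eGF_even]

lemma eGFginv_contOn (hm : 2 ≤ m) :
    ContinuousOn (fun t => (eGFg m t)⁻¹) (Set.Ioo (-1:ℝ) 1) :=
  ContinuousOn.inv₀ eGFg_cont.continuousOn (fun y hy => ne_of_gt (eGFg_pos hm hy))

lemma eGFh_integrable (hm : 2 ≤ m) {a b : ℝ} (ha : a ∈ Set.Ioo (-1:ℝ) 1)
    (hb : b ∈ Set.Ioo (-1:ℝ) 1) :
    IntervalIntegrable (fun t => (eGFg m t)⁻¹) MeasureTheory.volume a b :=
  ((eGFginv_contOn hm).mono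
    (Set.OrdConnected.uIcc_subset Set.ordConnected_Ioo ha hb)).intervalIntegrable

lemma eGFh_hasDerivAt (hm : 2 ≤ m) {y : ℝ} (hy : y ∈ Set.Ioo (-1:ℝ) 1) :
    HasDerivAt (eGFh m) (eGFg m y)⁻¹ y := by
  have h0 : (0:ℝ) ∈ Set.Ioo (-1:ℝ) 1 := by norm_num
  exact intervalIntegral.integral_hasDerivAt_right (eGFh_integrable hm h0 hy)
    ((eGFginv_contOn hm).stronglyMeasurableAtFilter isOpen_Ioo y hy)
    (eGFg_cont.continuousAt.inv₀ (ne_of_gt (eGFg_pos hm hy)))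

lemma eGFh_contOn (hm : 2 ≤ m) : ContinuousOn (eGFh m) (Set.Ioo (-1:ℝ) 1) :=
  fun _ hy => ((eGFh_hasDerivAt hm hy).continuousAt).continuousWithinAt

lemma eGFh_mono (hm : 2 ≤ m) : StrictMonoOn (eGFh m) (Set.Ioo (-1:ℝ) 1) := by
  apply strictMonoOn_of_deriv_pos (convex_Ioo _ _) (eGFh_contOn hm)
  intro y hy
  rw [interior_Ioo] at hy
  rw [(eGFh_hasDerivAt hm hy).deriv]
  exact inv_pos.2 (eGFg_pos hm hy)

lemma eGFh_zero : eGFh m 0 = 0 := intervalIntegral.integral_same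

lemma eGFh_odd (y : ℝ) : eGFh m (-y) = -eGFh m y := by
  have h1 := intervalIntegral.integral_comp_neg (a := (0:ℝ)) (b := y)
    (f := fun t => (eGFg m t)⁻¹)
  simp only [eGFg_even, neg_zero] at h1
  show (∫ t in (0:ℝ)..(-y), (eGFg m t)⁻¹) = -eGFh m y
  rw [intervalIntegral.integral_symm, ← h1]
  rfl

lemma eGF_log_antideriv {c y : ℝ} (hc : 0 < c) (hy0 : 0 ≤ y) (hy1 : y < 1) :
    (∫ t in (0:ℝ)..y, (c * (1 - t))⁻¹) = c⁻¹ * (-Real.log (1 - y)) := by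
  have key : ∀ t ∈ Set.uIcc (0:ℝ) y,
      HasDerivAt (fun u => -(c⁻¹ * Real.log (1 - u))) ((c * (1 - t))⁻¹) t := by
    intro t ht
    rw [Set.uIcc_of_le hy0] at ht
    have h1t : (0:ℝ) < 1 - t := by obtain ⟨a, b⟩ := ht; linarith
    have hd : HasDerivAt (fun u : ℝ => 1 - u) (-1) t := by
      simpa using (hasDerivAt_id t).const_sub (1:ℝ)
    have h2 := ((Real.hasDerivAt_log (ne_of_gt h1t)).comp t hd).const_mul c⁻¹
    have h3 := h2.neg
    refine h3.congr_deriv ?_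
    field_simp
  rw [intervalIntegral.integral_eq_sub_of_hasDerivAt key]
  · simp
  · apply ContinuousOn.intervalIntegrable
    apply ContinuousOn.inv₀
    · exact (continuous_const.mul (continuous_const.sub continuous_id)).continuousOn
    · intro t ht
      rw [Set.uIcc_of_le hy0] at ht
      have : (0:ℝ) < 1 - t := by obtain ⟨a, b⟩ := ht; linarith
      positivity

lemma eGF_sqrtm_pos {m : ℕ} (hm : 2 ≤ m) : (1:ℝ) ≤ Real.sqrt m :=
  Real.le_sqrt_of_sq_le (by norm_num; exact_mod_cast Nat.one_le_iff_ne_zero.2 (by omega))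

lemma eGFh_le (hm : 2 ≤ m) {y : ℝ} (hy0 : 0 ≤ y) (hy1 : y < 1) :
    eGFh m y ≤ -Real.log (1 - y) := by
  have hIoo : y ∈ Set.Ioo (-1:ℝ) 1 := ⟨by linarith, hy1⟩
  have h0 : (0:ℝ) ∈ Set.Ioo (-1:ℝ) 1 := by norm_num
  have hcalc := eGF_log_antideriv (c := 1) one_pos hy0 hy1
  simp only [one_mul, inv_one] at hcalc
  rw [show -Real.log (1 - y) = ∫ t in (0:ℝ)..y, (1 - t)⁻¹ by rw [hcalc]]
  apply intervalIntegral.integral_mono_on hy0 (eGFh_integrable hm h0 hIoo)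
  · apply ContinuousOn.intervalIntegrable
    apply ContinuousOn.inv₀ (continuous_const.sub continuous_id).continuousOn
    intro t ht
    rw [Set.uIcc_of_le hy0] at ht
    have : (0:ℝ) < 1 - t := by obtain ⟨a, b⟩ := ht; linarith
    simp only [Pi.sub_apply, id_eq]
    exact ne_of_gt this
  · intro t ht
    obtain ⟨ht0, ht1⟩ := ht
    have h1t : (0:ℝ) < 1 - t := by linarith
    have htIcc : t ∈ Set.Icc (-1:ℝ) 1 := ⟨by linarith, by linarith⟩
    have hglb : 1 - t ≤ eGFg m t := by
      have := eGFg_lb hm htIcc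
      nlinarith
    exact inv_anti₀ h1t hglb

lemma eGFh_ge (hm : 2 ≤ m) {y : ℝ} (hy0 : 0 ≤ y) (hy1 : y < 1) :
    (2 * Real.sqrt m)⁻¹ * (-Real.log (1 - y)) ≤ eGFh m y := by
  have hsm := eGF_sqrtm_pos hm
  have hc : (0:ℝ) < 2 * Real.sqrt m := by linarith
  have hIoo : y ∈ Set.Ioo (-1:ℝ) 1 := ⟨by linarith, hy1⟩
  have h0 : (0:ℝ) ∈ Set.Ioo (-1:ℝ) 1 := by norm_num
  rw [← eGF_log_antideriv hc hy0 hy1]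
  apply intervalIntegral.integral_mono_on hy0
  · apply ContinuousOn.intervalIntegrable
    apply ContinuousOn.inv₀
    · exact (continuous_const.mul (continuous_const.sub continuous_id)).continuousOn
    · intro t ht
      rw [Set.uIcc_of_le hy0] at ht
      have : (0:ℝ) < 1 - t := by obtain ⟨a, b⟩ := ht; linarith
      positivity
  · exact eGFh_integrable hm h0 hIoo
  · intro t ht
    obtain ⟨ht0, ht1⟩ := ht
    have h1t : (0:ℝ) < 1 - t := by linarith
    have htIcc : t ∈ Set.Icc (-1:ℝ) 1 := ⟨by linarith, by linarith⟩
    have htIoo : t ∈ Set.Ioo (-1:ℝ) 1 := ⟨by linarith, by linarith⟩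
    have hgub : eGFg m t ≤ 2 * Real.sqrt m * (1 - t) := by
      have h1 := eGFg_ub hm htIcc
      nlinarith [mul_nonneg (Real.sqrt_nonneg (m:ℝ)) (sq_nonneg (1 - t))]
    have hgpos := eGFg_pos hm htIoo
    have := inv_anti₀ hgpos hgub
    calc (2 * Real.sqrt m * (1 - t))⁻¹ ≤ (eGFg m t)⁻¹ := this
    _ = (eGFg m t)⁻¹ := rfl

lemma eGFh_surj (hm : 2 ≤ m) (s : ℝ) : ∃ y ∈ Set.Ioo (-1:ℝ) 1, eGFh m y = s := by
  suffices H : ∀ s : ℝ, 0 ≤ s → ∃ y ∈ Set.Ioo (-1:ℝ) 1, eGFh m y = s by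
    rcases le_or_gt 0 s with h | h
    · exact H s h
    · obtain ⟨y, hy, hyv⟩ := H (-s) (by linarith)
      exact ⟨-y, ⟨by linarith [hy.2], by linarith [hy.1]⟩, by rw [eGFh_odd, hyv]; ring⟩
  intro s hs
  have hsm := eGF_sqrtm_pos hm
  set β := 2 * Real.sqrt m with hβdef
  have hβ : (1:ℝ) ≤ β := by simp only [hβdef]; linarith
  set b := 1 - Real.exp (-(β * (s + 1))) with hbdef
  have hexp : Real.exp (-(β * (s + 1))) ≤ 1 := Real.exp_le_one_iff.2 (by nlinarith)
  have hb0 : 0 ≤ b := by simp only [hbdef]; linarith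
  have hb1 : b < 1 := by
    have := Real.exp_pos (-(β * (s + 1)))
    simp only [hbdef]; linarith
  have hval : s + 1 ≤ eGFh m b := by
    have h1 := eGFh_ge hm hb0 hb1
    rw [show (1:ℝ) - b = Real.exp (-(β * (s + 1))) by simp [hbdef], Real.log_exp] at h1
    have hβ0 : β ≠ 0 := by linarith
    rw [show β⁻¹ * (- -(β * (s+1))) = s + 1 by field_simp] at h1
    exact h1
  have hcont : ContinuousOn (eGFh m) (Set.Icc 0 b) := by
    apply (eGFh_contOn hm).mono
    intro t ht
    exact ⟨by linarith [ht.1], lt_of_le_of_lt ht.2 hb1⟩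
  have hmem : s ∈ Set.Icc (eGFh m 0) (eGFh m b) := ⟨by rw [eGFh_zero]; exact hs, by linarith⟩
  obtain ⟨y, hy, hyv⟩ := intermediate_value_Icc hb0 hcont hmem
  exact ⟨y, ⟨by linarith [hy.1], lt_of_le_of_lt hy.2 hb1⟩, hyv⟩

end aux3

/-- for `m ≥ 2` and `F(y) = (y^{2m} − m y²)/(m−1)` one has
`F(1) = F(−1) = −1`, `F'(±1) = 0`, `|F| < 1` on `(−1,1)`, and there is a global solution
of `x' = cos θ`, `u' = sin θ`, `θ' = F'(x)` with `sin θ = F(x)`, `cos θ > 0`,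
`−1 < x < 1`, `x(s) → −1` as `s → −∞` and `x(s) → 1` as `s → +∞`; the plane curve
`(x,u)` is an infinite geodesic graph at the even jet level `k = 2m ≥ 4`. -/
theorem stmt_18 (m : ℕ) (hm : 2 ≤ m) :
    evenGraphF m 1 = -1 ∧
    evenGraphF m (-1) = -1 ∧
    deriv (evenGraphF m) 1 = 0 ∧
    deriv (evenGraphF m) (-1) = 0 ∧
    (∀ y ∈ Set.Ioo (-1 : ℝ) 1, |evenGraphF m y| < 1) ∧
    ∃ x u θ : ℝ → ℝ,
      (∀ s : ℝ, HasDerivAt x (Real.cos (θ s)) s ∧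
        HasDerivAt u (Real.sin (θ s)) s ∧
        HasDerivAt θ (deriv (evenGraphF m) (x s)) s ∧
        Real.sin (θ s) = evenGraphF m (x s) ∧
        0 < Real.cos (θ s) ∧ x s ∈ Set.Ioo (-1 : ℝ) 1) ∧
      Tendsto x atBot (nhds (-1)) ∧ Tendsto x atTop (nhds 1) := by
  refine ⟨eGF_one hm, eGF_neg_one hm, eGF_deriv_one hm, eGF_deriv_neg_one hm,
    fun y hy => eGF_abs_lt hm hy, ?_⟩
  have h0Ioo : (0:ℝ) ∈ Set.Ioo (-1:ℝ) 1 := by norm_num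
  -- the inverse function x of eGFh
  set x : ℝ → ℝ := fun s => Classical.choose (eGFh_surj hm s) with hxdef
  have hx : ∀ s, x s ∈ Set.Ioo (-1:ℝ) 1 ∧ eGFh m (x s) = s := by
    intro s
    obtain ⟨h1, h2⟩ := Classical.choose_spec (eGFh_surj hm s)
    exact ⟨h1, h2⟩
  have hxIcc : ∀ s, x s ∈ Set.Icc (-1:ℝ) 1 :=
    fun s => ⟨(hx s).1.1.le, (hx s).1.2.le⟩
  have hinj : ∀ {a b : ℝ}, a ∈ Set.Ioo (-1:ℝ) 1 → b ∈ Set.Ioo (-1:ℝ) 1 →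
      eGFh m a = eGFh m b → a = b := fun ha hb hab => (eGFh_mono hm).injOn ha hb hab
  have hxmono : StrictMono x := by
    intro s1 s2 h12
    rcases lt_trichotomy (x s1) (x s2) with h | h | h
    · exact h
    · exfalso
      have : s1 = s2 := by rw [← (hx s1).2, ← (hx s2).2, h]
      linarith
    · have := (eGFh_mono hm) (hx s2).1 (hx s1).1 h
      rw [(hx s1).2, (hx s2).2] at this
      linarith
  have hxsurjval : ∀ y ∈ Set.Ioo (-1:ℝ) 1, x (eGFh m y) = y :=
    fun y hy => hinj (hx _).1 hy (hx _).2
  have hrange : Set.range x = Set.Ioo (-1:ℝ) 1 := by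
    apply Set.Subset.antisymm
    · rintro _ ⟨s, rfl⟩; exact (hx s).1
    · intro y hy; exact ⟨eGFh m y, hxsurjval y hy⟩
  have hxcont : ∀ s, ContinuousAt x s := by
    intro s
    apply StrictMonoOn.continuousAt_of_image_mem_nhds
      (f := x) (s := Set.univ) (fun a _ b _ h => hxmono h) Filter.univ_mem
    rw [Set.image_univ, hrange]
    exact isOpen_Ioo.mem_nhds (hx s).1
  have hxderiv : ∀ s, HasDerivAt x (eGFg m (x s)) s := by
    intro s
    have h := HasDerivAt.of_local_left_inverse (hxcont s)
      (eGFh_hasDerivAt hm (hx s).1)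
      (inv_ne_zero (ne_of_gt (eGFg_pos hm (hx s).1)))
      (Eventually.of_forall fun y => (hx y).2)
    simpa [inv_inv] using h
  -- θ and u
  set θ : ℝ → ℝ := fun s => Real.arcsin (evenGraphF m (x s)) with hθdef
  have hsinθ : ∀ s, Real.sin (θ s) = evenGraphF m (x s) := fun s =>
    Real.sin_arcsin (eGF_ge_neg_one hm (hxIcc s)) ((eGF_le_zero hm (hxIcc s)).trans zero_le_one)
  have hcosθ : ∀ s, Real.cos (θ s) = eGFg m (x s) := by
    intro s
    rw [hθdef]
    rw [Real.cos_arcsin]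
    rfl
  have hcospos : ∀ s, 0 < Real.cos (θ s) := fun s => (hcosθ s) ▸ eGFg_pos hm (hx s).1
  have hxcont' : Continuous x := continuous_iff_continuousAt.2 hxcont
  have hFcont : Continuous (evenGraphF m) := by
    unfold evenGraphF
    exact ((continuous_pow (2*m)).sub (continuous_const.mul (continuous_pow 2))).div_const _
  have hθcont : Continuous θ := Real.continuous_arcsin.comp (hFcont.comp hxcont')
  set u : ℝ → ℝ := fun s => ∫ t in (0:ℝ)..s, Real.sin (θ t) with hudef
  have huderiv : ∀ s, HasDerivAt u (Real.sin (θ s)) s := fun s =>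
    ((Real.continuous_sin.comp hθcont).integral_hasStrictDerivAt 0 s).hasDerivAt
  have hθderiv : ∀ s, HasDerivAt θ (deriv (evenGraphF m) (x s)) s := by
    intro s
    have habs := eGF_abs_lt hm (hx s).1
    rw [abs_lt] at habs
    have hFx := (eGF_hasDerivAt hm (x s)).comp s (hxderiv s)
    have harc := Real.hasDerivAt_arcsin (ne_of_gt habs.1) (ne_of_lt habs.2)
    have h2 := harc.comp s hFx
    have hgne : eGFg m (x s) ≠ 0 := ne_of_gt (eGFg_pos hm (hx s).1)
    have hkey : (1 / Real.sqrt (1 - (evenGraphF m (x s))^2)) *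
        ((2*(m:ℝ) * (x s)^(2*m-1) - 2*(m:ℝ)*(x s)) / ((m:ℝ) - 1) * eGFg m (x s))
        = deriv (evenGraphF m) (x s) := by
      rw [eGF_deriv hm]
      show (1 / eGFg m (x s)) * (_ * eGFg m (x s)) = _
      field_simp
    rw [← hkey]
    exact h2
  -- limits
  have hx0 : x 0 = 0 := by
    have := hxsurjval 0 h0Ioo
    rwa [eGFh_zero] at this
  have hxnonneg : ∀ s : ℝ, 0 ≤ s → 0 ≤ x s := by
    intro s hs
    by_contra hneg
    push_neg at hneg
    have := (eGFh_mono hm) (hx s).1 h0Ioo hneg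
    rw [(hx s).2, eGFh_zero] at this
    linarith
  have hlow : ∀ s : ℝ, 0 ≤ s → 1 - Real.exp (-s) ≤ x s := by
    intro s hs
    have h1 := eGFh_le hm (hxnonneg s hs) (hx s).1.2
    rw [(hx s).2] at h1
    have hpos : 0 < 1 - x s := by linarith [(hx s).1.2]
    have h2 : Real.log (1 - x s) ≤ -s := by linarith
    have h3 := Real.exp_le_exp.2 h2
    rw [Real.exp_log hpos] at h3
    linarith
  have htop : Tendsto x atTop (nhds 1) := by
    apply tendsto_of_tendsto_of_tendsto_of_le_of_le'
      (g := fun s : ℝ => 1 - Real.exp (-s)) (h := fun _ : ℝ => (1:ℝ))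
    · have hexp : Tendsto (fun s : ℝ => Real.exp (-s)) atTop (nhds 0) :=
        Real.tendsto_exp_atBot.comp tendsto_neg_atTop_atBot
      simpa using tendsto_const_nhds.sub hexp
    · exact tendsto_const_nhds
    · exact (eventually_ge_atTop 0).mono (fun s hs => hlow s hs)
    · exact Eventually.of_forall fun s => ((hx s).1.2).le
  have hxodd : ∀ s : ℝ, x (-s) = -x s := by
    intro s
    have hmem : -x s ∈ Set.Ioo (-1:ℝ) 1 :=
      ⟨by linarith [(hx s).1.2], by linarith [(hx s).1.1]⟩
    apply hinj (hx (-s)).1 hmem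
    rw [(hx (-s)).2, eGFh_odd, (hx s).2]
  have hbot : Tendsto x atBot (nhds (-1)) := by
    have key : ∀ s : ℝ, x s = -x (-s) := by
      intro s
      have := hxodd (-s)
      rw [neg_neg] at this
      linarith
    have h1 : Tendsto (fun s : ℝ => x (-s)) atBot (nhds 1) :=
      htop.comp tendsto_neg_atBot_atTop
    rw [show x = fun s : ℝ => -x (-s) from funext key]
    simpa using h1.neg
  refine ⟨x, u, θ, fun s => ⟨?_, huderiv s, hθderiv s, hsinθ s, hcospos s, (hx s).1⟩,
    hbot, htop⟩
  rw [hcosθ s]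
  exact hxderiv s
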